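/- arXiv:2209.03044 — 5 statements merged into one kernel-verified Lean document; each statement's English description precedes it below -/
import Mathlib

section
/- Let n ≥ m ≥ 1, let p : Fin m → Fin n → ℤ be an integer exponent matrix whose m rows are linearly independent over ℚ, and let α : Fin m → ℂˣ. Let A be the toric arrangement with subtori H i = {z : Fin n → ℂˣ | ∏ j, (z j) ^ (p i j) = α i}. Then there exist an integer matrix q : Fin m → Fin n → ℤ and a homeomorphism φ : (Fin n → ℂˣ) ≃ₜ (Fin n → ℂˣ) such that for every i : Fin m, the image φ '' (H i) equals the centered subtorus {t : Fin n → ℂˣ | ∏ j, (t j) ^ (q i j) = 1}. -/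
open Matrix

theorem aux_mulVec_surjective {m n : ℕ} (P : Matrix (Fin m) (Fin n) ℚ)
    (hp : LinearIndependent ℚ (fun i : Fin m => P i)) :
    Function.Surjective P.mulVecLin := by
  have hinj : Function.Injective Pᵀ.mulVecLin := by
    intro x y hxy
    apply Matrix.vecMul_injective_iff.mpr hp
    simpa [Matrix.mulVecLin_apply, Matrix.mulVec_transpose] using hxy
  have hrankT : Pᵀ.rank = m := by
    rw [Matrix.rank, LinearMap.finrank_range_of_inj hinj, Module.finrank_fin_fun]
  have hrank : P.rank = m := by
    rw [← Matrix.rank_transpose, hrankT]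
  rw [← LinearMap.range_eq_top]
  apply Submodule.eq_top_of_finrank_eq
  rw [← Matrix.rank, hrank, Module.finrank_fin_fun]

theorem aux_solve {m n : ℕ} (p : Fin m → Fin n → ℤ)
    (hp : LinearIndependent ℚ (fun i : Fin m => fun j : Fin n => (p i j : ℚ)))
    (c : Fin m → ℂ) : ∃ x : Fin n → ℂ, ∀ i, ∑ j, (p i j : ℂ) * x j = c i := by
  set P : Matrix (Fin m) (Fin n) ℚ := Matrix.of (fun i j => (p i j : ℚ)) with hP
  have hsurj := aux_mulVec_surjective P hp
  -- columns of a right inverse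
  choose b hb using fun k => hsurj (Pi.single k 1)
  refine ⟨fun j => ∑ k, (b k j : ℂ) * c k, fun i => ?_⟩
  have key : ∀ k, ∑ j, (p i j : ℂ) * (b k j : ℂ) = if i = k then 1 else 0 := by
    intro k
    have := congrFun (hb k) i
    simp only [Matrix.mulVecLin_apply, Matrix.mulVec, dotProduct, hP,
      Matrix.of_apply] at this
    have := congrArg (fun r : ℚ => (r : ℂ)) this
    push_cast at this
    rw [this]
    by_cases h : i = k <;> simp [h, Pi.single_apply]
  calc ∑ j, (p i j : ℂ) * ∑ k, (b k j : ℂ) * c k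
      = ∑ k, (∑ j, (p i j : ℂ) * (b k j : ℂ)) * c k := by
        simp_rw [Finset.mul_sum, Finset.sum_mul, mul_assoc]
        exact Finset.sum_comm
    _ = c i := by simp [key, Finset.sum_ite_eq, if_pos]


/-- A toric arrangement in `(ℂˣ)^n` whose associated integer exponent
matrix has maximal rank (rows linearly independent over `ℚ`) can be mapped by a
homeomorphism of `(ℂˣ)^n` onto a centered toric arrangement. -/
theorem maximal_rank_toric_arrangement_centered
    (n m : ℕ) (hm : 1 ≤ m) (hmn : m ≤ n)
    (p : Fin m → Fin n → ℤ)
    (hp : LinearIndependent ℚ (fun i : Fin m => fun j : Fin n => (p i j : ℚ)))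
    (α : Fin m → ℂˣ) :
    ∃ (q : Fin m → Fin n → ℤ) (φ : (Fin n → ℂˣ) ≃ₜ (Fin n → ℂˣ)),
      ∀ i : Fin m,
        φ '' {z : Fin n → ℂˣ | ∏ j, (z j) ^ (p i j) = α i}
          = {t : Fin n → ℂˣ | ∏ j, (t j) ^ (q i j) = 1} := by

  obtain ⟨x, hx⟩ := aux_solve p hp (fun i => Complex.log (((α i)⁻¹ : ℂˣ) : ℂ))
  set β : Fin n → ℂˣ := fun j => Units.mk0 (Complex.exp (x j)) (Complex.exp_ne_zero _) with hβ
  have hβprod : ∀ i, ∏ j, (β j) ^ (p i j) = (α i)⁻¹ := by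
    intro i
    apply Units.ext
    have h1 : ((∏ j, (β j) ^ (p i j) : ℂˣ) : ℂ) = ∏ j, ((β j : ℂ)) ^ (p i j) := by
      rw [show ((∏ j, (β j) ^ (p i j) : ℂˣ) : ℂ) = (Units.coeHom ℂ) (∏ j, (β j) ^ (p i j)) from rfl,
        map_prod]
      simp [Units.val_zpow_eq_zpow_val]
    rw [h1]
    calc ∏ j, ((β j : ℂ)) ^ (p i j) = ∏ j, Complex.exp ((p i j) * x j) := by
          refine Finset.prod_congr rfl fun j _ => ?_
          rw [hβ]
          exact (Complex.exp_int_mul (x j) (p i j)).symm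
      _ = Complex.exp (∑ j, (p i j) * x j) := (Complex.exp_sum _ _).symm
      _ = (((α i)⁻¹ : ℂˣ) : ℂ) := by rw [hx i, Complex.exp_log (Units.ne_zero _)]
  refine ⟨p, Homeomorph.mulRight β, fun i => ?_⟩
  rw [show (⇑(Homeomorph.mulRight β)) '' {z : Fin n → ℂˣ | ∏ j, (z j) ^ (p i j) = α i}
      = ⇑(Homeomorph.mulRight β).symm ⁻¹' {z : Fin n → ℂˣ | ∏ j, (z j) ^ (p i j) = α i} from
    congrFun (Set.image_eq_preimage_of_inverse (Homeomorph.mulRight β).left_inv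
      (Homeomorph.mulRight β).right_inv) _]
  ext t
  simp only [Set.mem_preimage, Set.mem_setOf_eq, Homeomorph.mulRight_symm,
    Homeomorph.coe_mulRight, Pi.mul_apply, Pi.inv_apply]
  rw [show (∏ j, (t j * (β j)⁻¹) ^ (p i j)) = (∏ j, (t j) ^ (p i j)) * (∏ j, (β j) ^ (p i j))⁻¹ by
    simp_rw [mul_zpow, _root_.inv_zpow]
    rw [Finset.prod_mul_distrib, Finset.prod_inv_distrib]]
  rw [hβprod i, inv_inv, mul_eq_right]
end

section
/- Let n ≥ m ≥ 1, let p : Fin m → Fin n → ℤ have rows linearly independent over ℚ, and let α : Fin m → ℂˣ. Let H i = {z : Fin n → ℂˣ | ∏ j, (z j) ^ (p i j) = α i} and let M(A) = (Fin n → ℂˣ) \ ⋃ i, H i be the complement. Then there exists a centered toric arrangement, i.e. an integer matrix q : Fin m → Fin n → ℤ with subtori T i = {t : Fin n → ℂˣ | ∏ j, (t j) ^ (q i j) = 1}, such that M(A) is homeomorphic to the complement M(B) = (Fin n → ℂˣ) \ ⋃ i, T i. -/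
open Matrix in
lemma exists_solution (n m : ℕ) (p : Fin m → Fin n → ℤ)
    (hp : LinearIndependent ℚ (fun i : Fin m => fun j : Fin n => (p i j : ℚ)))
    (c : Fin m → ℂ) :
    ∃ b : Fin n → ℂ, ∀ i, ∑ j, (p i j : ℂ) * b j = c i := by
  classical
  set M : Matrix (Fin m) (Fin n) ℚ := Matrix.of (fun i j => (p i j : ℚ)) with hM
  have hrows : LinearIndependent ℚ (fun i => M i) := hp
  have hinj : Function.Injective M.vecMul := Matrix.vecMul_injective_iff.mpr hrows
  set G : Matrix (Fin m) (Fin m) ℚ := M * Mᵀ with hG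
  have hGinj : Function.Injective G.mulVec := by
    intro v w hvw
    have key : ∀ v : Fin m → ℚ, G *ᵥ v = 0 → v = 0 := by
      intro v hv
      have hw : (v ᵥ* M) ⬝ᵥ (v ᵥ* M) = 0 := by
        have h1 : G *ᵥ v = M *ᵥ (Mᵀ *ᵥ v) := by rw [hG, Matrix.mulVec_mulVec]
        have h2 : Mᵀ *ᵥ v = v ᵥ* M := Matrix.mulVec_transpose M v
        calc (v ᵥ* M) ⬝ᵥ (v ᵥ* M) = v ⬝ᵥ (M *ᵥ (v ᵥ* M)) := (Matrix.dotProduct_mulVec _ _ _).symm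
          _ = v ⬝ᵥ (G *ᵥ v) := by rw [← h2, ← h1]
          _ = 0 := by rw [hv, dotProduct_zero]
      have hw0 : v ᵥ* M = 0 := dotProduct_self_eq_zero.mp hw
      have : v ᵥ* M = 0 ᵥ* M := by rw [hw0, Matrix.zero_vecMul]
      exact hinj this
    have := key (v - w) (by rw [Matrix.mulVec_sub, hvw, sub_self])
    exact sub_eq_zero.mp this
  have hGunit : IsUnit G := Matrix.mulVec_injective_iff_isUnit.mp hGinj
  have hdet : IsUnit G.det := (Matrix.isUnit_iff_isUnit_det G).mp hGunit
  -- move to ℂ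
  set f : ℚ →+* ℂ := Rat.castHom ℂ with hf
  set Mc : Matrix (Fin m) (Fin n) ℂ := M.map f with hMc
  set Gc : Matrix (Fin m) (Fin m) ℂ := Mc * Mcᵀ with hGc
  have hGcG : Gc = G.map f := by
    rw [hGc, hG, Matrix.map_mul, Matrix.transpose_map]
  have hdetc : IsUnit Gc.det := by
    have : Gc.det = f G.det := by
      rw [hGcG, f.map_det]; rfl
    rw [this]
    refine isUnit_iff_ne_zero.mpr fun h => hdet.ne_zero ?_
    simpa using h
  refine ⟨Mcᵀ *ᵥ (Gc⁻¹ *ᵥ c), fun i => ?_⟩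
  have : Mc *ᵥ (Mcᵀ *ᵥ (Gc⁻¹ *ᵥ c)) = c := by
    rw [Matrix.mulVec_mulVec, ← hGc, Matrix.mulVec_mulVec, Matrix.mul_nonsing_inv _ hdetc,
      Matrix.one_mulVec]
  have := congr_fun this i
  simpa [Matrix.mulVec, dotProduct, hMc, hM, Matrix.map_apply] using this

lemma exists_base (n m : ℕ) (p : Fin m → Fin n → ℤ)
    (hp : LinearIndependent ℚ (fun i : Fin m => fun j : Fin n => (p i j : ℚ)))
    (α : Fin m → ℂˣ) :
    ∃ a : Fin n → ℂˣ, ∀ i, ∏ j, (a j) ^ (p i j) = α i := by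
  obtain ⟨b, hb⟩ := exists_solution n m p hp (fun i => Complex.log (α i))
  refine ⟨fun j => Units.mk0 (Complex.exp (b j)) (Complex.exp_ne_zero _), fun i => ?_⟩
  apply Units.ext
  have : ∀ j, ((Units.mk0 (Complex.exp (b j)) (Complex.exp_ne_zero _) : ℂˣ) ^ (p i j) : ℂˣ)
      = (Units.mk0 (Complex.exp ((p i j) * b j)) (Complex.exp_ne_zero _)) := by
    intro j
    apply Units.ext
    rw [Units.val_zpow_eq_zpow_val]
    simp [Complex.exp_int_mul]
  calc ((∏ j, (Units.mk0 (Complex.exp (b j)) (Complex.exp_ne_zero _) : ℂˣ) ^ (p i j) : ℂˣ) : ℂ)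
      = ∏ j, Complex.exp ((p i j) * b j) := by
        rw [Units.coe_prod]
        exact Finset.prod_congr rfl fun j _ => by rw [this j]; rfl
    _ = Complex.exp (∑ j, (p i j) * b j) := (Complex.exp_sum _ _).symm
    _ = Complex.exp (Complex.log (α i)) := by rw [hb i]
    _ = (α i : ℂ) := Complex.exp_log (α i).ne_zero

/-- The complement of a toric arrangement whose associated matrix has
maximal rank is homeomorphic to the complement of a centered toric arrangement. -/
theorem complement_homeomorphic_centered
    (n m : ℕ) (hm : 1 ≤ m) (hmn : m ≤ n)
    (p : Fin m → Fin n → ℤ)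
    (hp : LinearIndependent ℚ (fun i : Fin m => fun j : Fin n => (p i j : ℚ)))
    (α : Fin m → ℂˣ) :
    ∃ q : Fin m → Fin n → ℤ,
      Nonempty
        ((↥((Set.univ : Set (Fin n → ℂˣ)) \
            ⋃ i : Fin m, {z : Fin n → ℂˣ | ∏ j, (z j) ^ (p i j) = α i})) ≃ₜ
         (↥((Set.univ : Set (Fin n → ℂˣ)) \
            ⋃ i : Fin m, {t : Fin n → ℂˣ | ∏ j, (t j) ^ (q i j) = 1}))) := by
  refine ⟨p, ?_⟩
  obtain ⟨a, ha⟩ := exists_base n m p hp α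
  have key : ∀ (t : Fin n → ℂˣ) (i : Fin m),
      ∏ j, ((a * t) j) ^ (p i j) = α i * ∏ j, (t j) ^ (p i j) := by
    intro t i
    rw [← ha i, ← Finset.prod_mul_distrib]
    exact Finset.prod_congr rfl fun j _ => by rw [Pi.mul_apply, mul_zpow]
  let e : (Fin n → ℂˣ) ≃ₜ (Fin n → ℂˣ) := Homeomorph.mulLeft a
  have heq : e '' ((Set.univ : Set (Fin n → ℂˣ)) \
        ⋃ i : Fin m, {t : Fin n → ℂˣ | ∏ j, (t j) ^ (p i j) = 1})
      = (Set.univ : Set (Fin n → ℂˣ)) \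
        ⋃ i : Fin m, {z : Fin n → ℂˣ | ∏ j, (z j) ^ (p i j) = α i} := by
    ext z
    rw [show (⇑e) = ⇑e.toEquiv from rfl, Equiv.image_eq_preimage_symm]
    have hsymm : e.symm z = a⁻¹ * z := rfl
    have hiff : ∀ i : Fin m, (∏ j, ((a⁻¹ * z) j) ^ (p i j) = 1)
        ↔ (∏ j, (z j) ^ (p i j) = α i) := by
      intro i
      have hz : ∏ j, (z j) ^ (p i j) = α i * ∏ j, ((a⁻¹ * z) j) ^ (p i j) := by
        have := key (a⁻¹ * z) i
        rwa [mul_inv_cancel_left] at this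
      constructor
      · intro h; rw [hz, h, mul_one]
      · intro h
        rw [hz] at h
        have := mul_left_cancel ((mul_one (α i)).symm ▸ h :
          α i * ∏ j, ((a⁻¹ * z) j) ^ (p i j) = α i * 1)
        exact this
    simp only [Set.mem_preimage, hsymm, Set.mem_diff, Set.mem_univ, true_and,
      Set.mem_iUnion, Set.mem_setOf_eq, not_exists]
    exact ⟨fun h i => fun hc => h i ((hiff i).mpr hc), fun h i hc => h i ((hiff i).mp hc)⟩
  exact ⟨((e.image _).trans (Homeomorph.setCongr heq)).symm⟩
end

section
/- Let n ≥ m ≥ 1, let p : Fin m → Fin n → ℤ have rows linearly independent over ℚ, let α : Fin m → ℂˣ, and let H i = {z : Fin n → ℂˣ | ∏ j, (z j) ^ (p i j) = α i}. Then there exist a homeomorphism φ of Fin n → ℂˣ and an integer matrix q : Fin m → Fin n → ℤ such that: (i) for every i, φ '' (H i) = {t : Fin n → ℂˣ | ∏ j, (t j) ^ (q i j) = α i}; (ii) q is in triangular form, meaning q i j = 0 whenever (j : ℕ) < (i : ℕ), and the diagonal entries are nonzero: q i ⟨(i : ℕ), lt_of_lt_of_le i.isLt (by assumption m ≤ n)⟩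 ≠ 0 for every i : Fin m. -/
open Finset in
lemma zpow_sum' {G : Type*} [CommGroup G] {ι : Type*} (x : G) (s : Finset ι) (f : ι → ℤ) :
    x ^ (∑ i ∈ s, f i) = ∏ i ∈ s, x ^ f i := by
  induction s using Finset.cons_induction with
  | empty => simp
  | cons a s ha ih => simp [Finset.sum_cons, Finset.prod_cons, zpow_add, ih]

open Finset in
lemma prod_zpow' {G : Type*} [CommGroup G] {ι : Type*} (s : Finset ι) (f : ι → G) (c : ℤ) :
    (∏ i ∈ s, f i) ^ c = ∏ i ∈ s, (f i) ^ c := by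
  induction s using Finset.cons_induction with
  | empty => simp
  | cons a s ha ih => simp [Finset.prod_cons, mul_zpow, ih]

variable {n : ℕ}

/-- the monomial map attached to an integer matrix -/
noncomputable def monomialMap (A : Matrix (Fin n) (Fin n) ℤ) :
    (Fin n → ℂˣ) → (Fin n → ℂˣ) := fun z j => ∏ k, z k ^ A j k

lemma monomialMap_comp (A B : Matrix (Fin n) (Fin n) ℤ) (z : Fin n → ℂˣ) :
    monomialMap A (monomialMap B z) = monomialMap (A * B) z := by
  funext j
  simp only [monomialMap]
  calc ∏ k, (∏ l, z l ^ B k l) ^ A j k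
      = ∏ k, ∏ l, z l ^ (A j k * B k l) := by
        refine Finset.prod_congr rfl fun k _ => ?_
        rw [prod_zpow']
        refine Finset.prod_congr rfl fun l _ => ?_
        rw [← zpow_mul, mul_comm]
    _ = ∏ l, ∏ k, z l ^ (A j k * B k l) := Finset.prod_comm
    _ = ∏ l, z l ^ (∑ k, A j k * B k l) := by
        refine Finset.prod_congr rfl fun l _ => ?_
        rw [zpow_sum']
    _ = _ := rfl

lemma monomialMap_one (z : Fin n → ℂˣ) : monomialMap (1 : Matrix (Fin n) (Fin n) ℤ) z = z := by
  funext j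
  simp only [monomialMap]
  rw [Finset.prod_eq_single j (fun k _ hk => by
    rw [Matrix.one_apply_ne (Ne.symm hk), zpow_zero]) (by simp)]
  rw [Matrix.one_apply_eq, zpow_one]

lemma continuous_monomialMap (A : Matrix (Fin n) (Fin n) ℤ) : Continuous (monomialMap A) := by
  refine continuous_pi fun j => ?_
  exact continuous_finset_prod _ fun k _ => (continuous_apply k).zpow (A j k)

/-- the homeomorphism of the torus attached to a unimodular integer matrix -/
noncomputable def monomialHomeo (A B : Matrix (Fin n) (Fin n) ℤ)
    (hAB : A * B = 1) (hBA : B * A = 1) : (Fin n → ℂˣ) ≃ₜ (Fin n → ℂˣ) where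
  toFun := monomialMap A
  invFun := monomialMap B
  left_inv z := by rw [monomialMap_comp, hBA, monomialMap_one]
  right_inv z := by rw [monomialMap_comp, hAB, monomialMap_one]
  continuous_toFun := continuous_monomialMap A
  continuous_invFun := continuous_monomialMap B


lemma rat_int_mul (q : ℚ) (D : ℤ) (h : (q.den : ℤ) ∣ D) : ∃ a : ℤ, (a : ℚ) = q * D := by
  obtain ⟨c, rfl⟩ := h
  refine ⟨q.num * c, ?_⟩
  push_cast
  rw [← Rat.mul_den_eq_num q]
  ring

lemma exists_triangular_basis (n m : ℕ) (hmn : m ≤ n)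
    (p : Fin m → Fin n → ℤ)
    (hp : LinearIndependent ℚ (fun i : Fin m => fun j : Fin n => (p i j : ℚ))) :
    ∃ (b : Module.Basis (Fin n) ℤ (Fin n → ℤ)) (q : Fin m → Fin n → ℤ),
      (∀ (i : Fin m) (k : Fin n), p i k = ∑ j : Fin n, q i j * b j k) ∧
      (∀ (i : Fin m) (j : Fin n), (j : ℕ) < (i : ℕ) → q i j = 0) ∧
      (∀ i : Fin m, q i ⟨(i : ℕ), lt_of_lt_of_le i.isLt hmn⟩ ≠ 0) := by
  classical
  set pQ : Fin m → (Fin n → ℚ) := fun i => fun j => (p i j : ℚ) with hpQ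
  -- a basis of ℚ^n whose i-th vector, for i < m, is pQ i
  obtain ⟨v, hv⟩ : ∃ v : Module.Basis (Fin n) ℚ (Fin n → ℚ),
      ∀ i : Fin m, v ⟨(i : ℕ), lt_of_lt_of_le i.isLt hmn⟩ = pQ i := by
    set P := Submodule.span ℚ (Set.range pQ) with hP
    obtain ⟨C, hC⟩ := P.exists_isCompl
    have hrP : Module.finrank ℚ P = m := by
      rw [finrank_span_eq_card hp, Fintype.card_fin]
    have hrC : Module.finrank ℚ C = n - m := by
      have h1 := Submodule.finrank_add_eq_of_isCompl hC
      rw [hrP, Module.finrank_fin_fun] at h1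
      omega
    set cb := Module.finBasisOfFinrankEq ℚ C hrC with hcb
    set e : (Fin m ⊕ Fin (n - m)) ≃ Fin n :=
      finSumFinEquiv.trans (finCongr (by omega)) with he
    refine ⟨(((Module.Basis.span hp).prod cb).map (Submodule.prodEquivOfIsCompl P C hC)).reindex e,
      fun i => ?_⟩
    have h1 : e (Sum.inl i) = ⟨(i : ℕ), lt_of_lt_of_le i.isLt hmn⟩ := by
      simp [he, Fin.ext_iff]
    rw [Module.Basis.reindex_apply, ← h1, Equiv.symm_apply_apply, Module.Basis.map_apply]
    have h2 : ((Module.Basis.span hp).prod cb) (Sum.inl i)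
        = ((Module.Basis.span hp) i, (0 : C)) := by
      exact Prod.ext (Module.Basis.prod_apply_inl_fst _ _ _) (Module.Basis.prod_apply_inl_snd _ _ _)
    rw [h2, Submodule.coe_prodEquivOfIsCompl']
    simp [Module.Basis.span_apply]
  -- the integer-to-rational coordinate map
  set toQ : (Fin n → ℤ) →ₗ[ℤ] (Fin n → ℚ) :=
    LinearMap.pi (fun j => (Int.castAddHom ℚ).toIntLinearMap.comp (LinearMap.proj j)) with htoQ
  have htoQ_apply : ∀ (x : Fin n → ℤ) (j : Fin n), toQ x j = (x j : ℚ) := fun x j => rfl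
  have htoQ_inj : Function.Injective toQ := by
    intro x y h
    funext j
    have := congrFun h j
    rw [htoQ_apply, htoQ_apply] at this
    exact_mod_cast this
  -- the flag of lattices
  set U : ℕ → Submodule ℚ (Fin n → ℚ) :=
    fun t => Submodule.span ℚ (v '' {j : Fin n | t ≤ (j : ℕ)}) with hU
  set W : ℕ → Submodule ℤ (Fin n → ℤ) :=
    fun t => Submodule.comap toQ ((U t).restrictScalars ℤ) with hW
  set ψ : Fin n → ((Fin n → ℤ) →ₗ[ℤ] ℚ) :=
    fun i => ((v.coord i).restrictScalars ℤ).comp toQ with hψ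
  have hψ_apply : ∀ (i : Fin n) (x : Fin n → ℤ), ψ i x = v.repr (toQ x) i := fun i x => rfl
  have memW_iff : ∀ (t : ℕ) (x : Fin n → ℤ),
      x ∈ W t ↔ ∀ i : Fin n, (i : ℕ) < t → v.repr (toQ x) i = 0 := by
    intro t x
    rw [hW]
    simp only [Submodule.mem_comap, Submodule.restrictScalars_mem, hU]
    rw [Module.Basis.mem_span_image]
    constructor
    · intro h i hi
      by_contra hne
      have : i ∈ (v.repr (toQ x)).support := Finsupp.mem_support_iff.2 hne
      have := h this
      simp only [Set.mem_setOf_eq] at this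
      omega
    · intro h i hi
      simp only [Finset.mem_coe, Finsupp.mem_support_iff] at hi
      simp only [Set.mem_setOf_eq]
      by_contra hlt
      exact hi (h i (by omega))
  have hWmono : ∀ t t' : ℕ, t ≤ t' → W t' ≤ W t := by
    intro t t' htt x hx
    rw [memW_iff] at hx ⊢
    exact fun i hi => hx i (by omega)
  -- choice of adapted generators
  have hbex : ∀ i : Fin n, ∃ y : Fin n → ℤ, y ∈ W (i : ℕ) ∧ ψ i y ≠ 0 ∧
      ∀ x ∈ W (i : ℕ), ∃ c : ℤ, ψ i x = c * ψ i y := by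
    intro i
    -- an element of `W i` on which `ψ i` does not vanish
    set N : ℤ := ∏ l : Fin n, ((v i l).den : ℤ) with hNdef
    have hden : ∀ j : Fin n, ((v i j).den : ℤ) ∣ N :=
      fun j => Finset.dvd_prod_of_mem _ (Finset.mem_univ j)
    have hNne : N ≠ 0 := Finset.prod_ne_zero_iff.2 fun l _ =>
      Int.natCast_ne_zero.2 (Rat.den_ne_zero _)
    choose a0 ha0 using fun j => rat_int_mul (v i j) N (hden j)
    have haQ : toQ a0 = (N : ℚ) • (v i) := by
      funext j
      rw [htoQ_apply, ha0, Pi.smul_apply, smul_eq_mul, mul_comm]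
    have haW : a0 ∈ W (i : ℕ) := by
      rw [hW]
      simp only [Submodule.mem_comap, Submodule.restrictScalars_mem, hU]
      rw [haQ]
      exact Submodule.smul_mem _ _ (Submodule.subset_span ⟨i, by simp, rfl⟩)
    have haψ : ψ i a0 = (N : ℚ) := by
      rw [hψ_apply, haQ, map_smul, Finsupp.smul_apply, Module.Basis.repr_self,
        Finsupp.single_eq_same, smul_eq_mul, mul_one]
    -- the image of `W i` under `ψ i` is a principal ℤ-submodule of ℚ
    set R : Submodule ℤ ℚ := Submodule.map (ψ i) (W (i : ℕ)) with hR
    obtain ⟨T, hT⟩ := Submodule.FG.map (ψ i) (IsNoetherian.noetherian (W (i : ℕ)))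
    set D : ℤ := ∏ r ∈ T, ((r : ℚ).den : ℤ) with hDdef
    have hDne : D ≠ 0 := Finset.prod_ne_zero_iff.2 fun l _ =>
      Int.natCast_ne_zero.2 (Rat.den_ne_zero _)
    have hDQ : (D : ℚ) ≠ 0 := by exact_mod_cast hDne
    have hclear : ∀ x ∈ R, ∃ c : ℤ, (c : ℚ) = x * D := by
      intro x hx
      rw [hR, ← hT] at hx
      induction hx using Submodule.span_induction with
      | mem x hxT => exact rat_int_mul x D (Finset.dvd_prod_of_mem _ hxT)
      | zero => exact ⟨0, by simp⟩
      | add x y _ _ hx hy =>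
        obtain ⟨cx, hcx⟩ := hx
        obtain ⟨cy, hcy⟩ := hy
        exact ⟨cx + cy, by push_cast [hcx, hcy]; ring⟩
      | smul c x _ hx =>
        obtain ⟨cx, hcx⟩ := hx
        refine ⟨c * cx, ?_⟩
        push_cast [hcx]
        rw [zsmul_eq_mul]
        push_cast
        ring
    set f : ℤ →ₗ[ℤ] ℚ := LinearMap.toSpanSingleton ℤ ℚ ((D : ℚ)⁻¹) with hf
    have hf_apply : ∀ c : ℤ, f c = (c : ℚ) * (D : ℚ)⁻¹ := by
      intro c
      rw [hf, LinearMap.toSpanSingleton_apply, zsmul_eq_mul]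
    set I : Ideal ℤ := Submodule.comap f R with hI
    obtain ⟨g0, hg0⟩ := (IsPrincipalIdealRing.principal I).principal
    set r : ℚ := (g0 : ℚ) * (D : ℚ)⁻¹ with hrdef
    have hrR : r ∈ R := by
      have hg0I : g0 ∈ I := by rw [hg0]; exact Submodule.mem_span_singleton_self g0
      rw [hI, Submodule.mem_comap, hf_apply] at hg0I
      exact hg0I
    have hRle : ∀ x ∈ R, ∃ c : ℤ, x = (c : ℚ) * r := by
      intro x hx
      obtain ⟨c0, hc0⟩ := hclear x hx
      have hx' : x = (c0 : ℚ) * (D : ℚ)⁻¹ := by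
        rw [hc0]
        field_simp
      have hc0I : c0 ∈ I := by
        rw [hI, Submodule.mem_comap, hf_apply, ← hx']
        exact hx
      rw [hg0] at hc0I
      obtain ⟨c, hc⟩ := Ideal.mem_span_singleton'.1 hc0I
      refine ⟨c, ?_⟩
      rw [hx', ← hc, hrdef]
      push_cast
      ring
    have hrne : r ≠ 0 := by
      intro h0
      have hNR : (N : ℚ) ∈ R := by
        rw [← haψ]
        exact Submodule.mem_map_of_mem haW
      obtain ⟨c, hc⟩ := hRle _ hNR
      rw [h0, mul_zero] at hc
      exact (by exact_mod_cast hNne : (N : ℚ) ≠ 0) hc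
    obtain ⟨y, hyW, hyr⟩ := Submodule.mem_map.1 hrR
    refine ⟨y, hyW, by rw [hyr]; exact hrne, fun x hx => ?_⟩
    obtain ⟨c, hc⟩ := hRle _ (Submodule.mem_map_of_mem hx)
    exact ⟨c, by rw [hc, hyr]⟩
  choose b hbW hbne hbgen using hbex
  -- "vertical" vanishing
  have hker : ∀ (t : ℕ) (x : Fin n → ℤ), x ∈ W t → ∀ i : Fin n, (i : ℕ) < t → ψ i x = 0 := by
    intro t x hx i hi
    rw [hψ_apply]
    exact (memW_iff t x).1 hx i hi
  have hstep : ∀ (i : Fin n) (x : Fin n → ℤ), x ∈ W (i : ℕ) → ψ i x = 0 → x ∈ W ((i : ℕ) + 1) := by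
    intro i x hx hzero
    rw [memW_iff] at hx ⊢
    intro i' hi'
    rcases Nat.lt_succ_iff_lt_or_eq.1 hi' with h | h
    · exact hx i' h
    · have : i' = i := Fin.ext h
      rw [this]
      rw [hψ_apply] at hzero
      exact hzero
  -- spanning
  have hWspan : ∀ (k t : ℕ), n - t ≤ k →
      W t ≤ Submodule.span ℤ (b '' {j : Fin n | t ≤ (j : ℕ)}) := by
    intro k
    induction k with
    | zero =>
      intro t ht x hx
      have hx0 : x = 0 := by
        apply htoQ_inj
        rw [map_zero]
        have : v.repr (toQ x) = 0 := by
          ext i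
          exact (memW_iff t x).1 hx i (by omega)
        have := congrArg v.repr.symm this
        rwa [LinearEquiv.symm_apply_apply, map_zero] at this
      rw [hx0]
      exact Submodule.zero_mem _
    | succ k ih =>
      intro t ht x hx
      by_cases htn : n ≤ t
      · have hx0 : x = 0 := by
          apply htoQ_inj
          rw [map_zero]
          have : v.repr (toQ x) = 0 := by
            ext i
            exact (memW_iff t x).1 hx i (by omega)
          have := congrArg v.repr.symm this
          rwa [LinearEquiv.symm_apply_apply, map_zero] at this
        rw [hx0]; exact Submodule.zero_mem _
      · push_neg at htn
        set i : Fin n := ⟨t, htn⟩ with hi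
        obtain ⟨c, hc⟩ := hbgen i x hx
        have hmem1 : x - c • b i ∈ W (t + 1) := by
          apply hstep i
          · exact Submodule.sub_mem _ hx (Submodule.smul_mem _ _ (hbW i))
          · rw [map_sub, map_smul, hc]
            simp [smul_eq_mul]
        have hmem2 : x - c • b i ∈ Submodule.span ℤ (b '' {j : Fin n | t ≤ (j : ℕ)}) := by
          refine Submodule.span_mono (Set.image_mono ?_) (ih (t + 1) (by omega) hmem1)
          intro j hj
          simp only [Set.mem_setOf_eq] at hj ⊢
          omega
        have hmem3 : c • b i ∈ Submodule.span ℤ (b '' {j : Fin n | t ≤ (j : ℕ)}) :=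
          Submodule.smul_mem _ _ (Submodule.subset_span ⟨i, by simp [hi], rfl⟩)
        have := Submodule.add_mem _ hmem2 hmem3
        simpa using this
  -- linear independence
  have hli : LinearIndependent ℤ b := by
    rw [linearIndependent_iff']
    intro s g hsum
    suffices H : ∀ N : ℕ, ∀ i ∈ s, (i : ℕ) < N → g i = 0 by
      intro i hi; exact H n i hi i.isLt
    intro N
    induction N with
    | zero => intro i _ hi; omega
    | succ N ihN =>
      intro i hi hiN
      by_cases hN : (i : ℕ) < N
      · exact ihN i hi hN
      · have hival : (i : ℕ) = N := by omega
        have h1 : ∑ j ∈ s.filter (fun j : Fin n => N ≤ (j : ℕ)), g j • b j = 0 := by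
          rw [← Finset.sum_filter_add_sum_filter_not s (fun j : Fin n => N ≤ (j : ℕ))] at hsum
          have h2 : ∑ j ∈ s.filter (fun j : Fin n => ¬ N ≤ (j : ℕ)), g j • b j = 0 := by
            apply Finset.sum_eq_zero
            intro j hj
            simp only [Finset.mem_filter, not_le] at hj
            rw [ihN j hj.1 hj.2, zero_smul]
          rw [h2, add_zero] at hsum
          exact hsum
        have hsplit : s.filter (fun j : Fin n => N ≤ (j : ℕ))
            = insert i (s.filter (fun j : Fin n => N + 1 ≤ (j : ℕ))) := by
          ext j
          simp only [Finset.mem_filter, Finset.mem_insert]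
          constructor
          · rintro ⟨hjs, hjN⟩
            rcases Nat.lt_or_ge (j : ℕ) (N + 1) with h | h
            · left; exact Fin.ext (by omega)
            · right; exact ⟨hjs, h⟩
          · rintro (rfl | ⟨hjs, hj⟩)
            · exact ⟨hi, by omega⟩
            · exact ⟨hjs, by omega⟩
        have hnotmem : i ∉ s.filter (fun j : Fin n => N + 1 ≤ (j : ℕ)) := by
          simp [hival]
        rw [hsplit, Finset.sum_insert hnotmem] at h1
        have hrest : ∑ j ∈ s.filter (fun j : Fin n => N + 1 ≤ (j : ℕ)), g j • b j ∈ W (N + 1) := by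
          apply Submodule.sum_mem
          intro j hj
          simp only [Finset.mem_filter] at hj
          exact Submodule.smul_mem _ _ (hWmono _ _ hj.2 (hbW j))
        have hmem : g i • b i ∈ W (N + 1) := by
          have : g i • b i = -(∑ j ∈ s.filter (fun j : Fin n => N + 1 ≤ (j : ℕ)), g j • b j) := by
            rw [eq_neg_iff_add_eq_zero]; exact h1
          rw [this]
          exact Submodule.neg_mem _ hrest
        have := hker (N + 1) _ hmem i (by omega)
        rw [map_smul] at this
        rcases smul_eq_zero.1 this with h | h
        · exact h
        · exact absurd h (hbne i)
  have hspan_top : ⊤ ≤ Submodule.span ℤ (Set.range b) := by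
    intro x _
    have hx0 : x ∈ W 0 := by rw [memW_iff]; intro i hi; omega
    have := hWspan n 0 (by omega) hx0
    have himg : b '' {j : Fin n | 0 ≤ (j : ℕ)} = Set.range b := by
      rw [show {j : Fin n | 0 ≤ (j : ℕ)} = Set.univ by ext; simp, Set.image_univ]
    rwa [himg] at this
  set B : Module.Basis (Fin n) ℤ (Fin n → ℤ) := Module.Basis.mk hli hspan_top with hB
  have hBcoe : ∀ j, B j = b j := fun j => by rw [hB, Module.Basis.coe_mk]
  -- p i lies in W i
  have hpW : ∀ i : Fin m, (p i) ∈ W (i : ℕ) := by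
    intro i
    rw [hW]
    simp only [Submodule.mem_comap, Submodule.restrictScalars_mem, hU]
    have h1 : toQ (p i) = pQ i := by funext j; rw [htoQ_apply]
    rw [h1, ← hv i]
    exact Submodule.subset_span ⟨_, by simp, rfl⟩
  set q : Fin m → Fin n → ℤ := fun i j => B.repr (p i) j with hq
  have hsupp : ∀ i : Fin m, ∀ j : Fin n, (j : ℕ) < (i : ℕ) → q i j = 0 := by
    intro i j hj
    have h1 : (p i) ∈ Submodule.span ℤ (B '' {j : Fin n | (i : ℕ) ≤ (j : ℕ)}) := by
      have himg : B '' {j : Fin n | (i : ℕ) ≤ (j : ℕ)} = b '' {j : Fin n | (i : ℕ) ≤ (j : ℕ)} := by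
        apply Set.image_congr
        intro j _; exact hBcoe j
      rw [himg]
      exact hWspan n (i : ℕ) (by omega) (hpW i)
    have h2 := (Module.Basis.mem_span_image B).1 h1
    rw [hq]
    by_contra hne
    have : j ∈ (B.repr (p i)).support := Finsupp.mem_support_iff.2 hne
    have := h2 this
    simp only [Set.mem_setOf_eq] at this
    omega
  refine ⟨B, q, ?_, hsupp, ?_⟩
  · intro i k
    have h1 := Module.Basis.sum_repr B (p i)
    conv_lhs => rw [← h1]
    rw [Finset.sum_apply]
    exact Finset.sum_congr rfl fun j _ => by rw [Pi.smul_apply, smul_eq_mul]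
  · intro i hzero
    set i0 : Fin n := ⟨(i : ℕ), lt_of_lt_of_le i.isLt hmn⟩ with hi0
    have h1 : (p i) ∈ Submodule.span ℤ (B '' {j : Fin n | (i : ℕ) + 1 ≤ (j : ℕ)}) := by
      rw [Module.Basis.mem_span_image]
      intro j hj
      simp only [Finset.mem_coe, Finsupp.mem_support_iff] at hj
      simp only [Set.mem_setOf_eq]
      by_contra hlt
      push_neg at hlt
      rcases Nat.lt_or_ge (j : ℕ) (i : ℕ) with h | h
      · exact hj (hsupp i j h)
      · have : j = i0 := Fin.ext (show (j : ℕ) = (i : ℕ) by omega)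
        rw [this] at hj
        exact hj hzero
    have h2 : (p i) ∈ W ((i : ℕ) + 1) := by
      have hle : Submodule.span ℤ (B '' {j : Fin n | (i : ℕ) + 1 ≤ (j : ℕ)}) ≤ W ((i : ℕ) + 1) := by
        rw [Submodule.span_le]
        rintro _ ⟨j, hj, rfl⟩
        simp only [Set.mem_setOf_eq] at hj
        rw [hBcoe]
        exact hWmono _ _ hj (hbW j)
      exact hle h1
    have h3 : pQ i ∈ U ((i : ℕ) + 1) := by
      have h4 : toQ (p i) = pQ i := by funext j; rw [htoQ_apply]
      rw [hW] at h2
      simp only [Submodule.mem_comap, Submodule.restrictScalars_mem] at h2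
      rwa [h4] at h2
    rw [← hv i, hU] at h3
    exact v.linearIndependent.notMem_span_image (by simp [hi0]) h3


/-- Step 2 of the main theorem: after a homeomorphic change of
coordinates of `(ℂˣ)^n`, the exponent matrix of a maximal-rank toric arrangement
can be put in triangular form with nonzero diagonal, keeping the same constants. -/
theorem toric_arrangement_triangular_form
    (n m : ℕ) (hm : 1 ≤ m) (hmn : m ≤ n)
    (p : Fin m → Fin n → ℤ)
    (hp : LinearIndependent ℚ (fun i : Fin m => fun j : Fin n => (p i j : ℚ)))
    (α : Fin m → ℂˣ) :
    ∃ (φ : (Fin n → ℂˣ) ≃ₜ (Fin n → ℂˣ)) (q : Fin m → Fin n → ℤ),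
      (∀ i : Fin m,
        φ '' {z : Fin n → ℂˣ | ∏ j, (z j) ^ (p i j) = α i}
          = {t : Fin n → ℂˣ | ∏ j, (t j) ^ (q i j) = α i}) ∧
      (∀ (i : Fin m) (j : Fin n), (j : ℕ) < (i : ℕ) → q i j = 0) ∧
      (∀ i : Fin m, q i ⟨(i : ℕ), lt_of_lt_of_le i.isLt hmn⟩ ≠ 0) := by
  obtain ⟨b, q, hexp, htri, hdiag⟩ := exists_triangular_basis n m hmn p hp
  set e := Pi.basisFun ℤ (Fin n) with he
  set A : Matrix (Fin n) (Fin n) ℤ := (e.toMatrix ⇑b).transpose with hA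
  set B' : Matrix (Fin n) (Fin n) ℤ := (b.toMatrix ⇑e).transpose with hB'
  have hA_apply : ∀ j k, A j k = b j k := by
    intro j k
    rw [hA, Matrix.transpose_apply, Module.Basis.toMatrix_apply, he, Pi.basisFun_repr]
  have hAB : A * B' = 1 := by
    rw [hA, hB', ← Matrix.transpose_mul, Module.Basis.toMatrix_mul_toMatrix_flip, Matrix.transpose_one]
  have hBA : B' * A = 1 := by
    rw [hA, hB', ← Matrix.transpose_mul, Module.Basis.toMatrix_mul_toMatrix_flip, Matrix.transpose_one]
  set φ := monomialHomeo A B' hAB hBA with hφ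
  have hφ_apply : ∀ z, φ z = monomialMap A z := fun z => rfl
  refine ⟨φ, q, ?_, htri, hdiag⟩
  intro i
  have key : ∀ z : Fin n → ℂˣ, ∏ j, (monomialMap A z j) ^ q i j = ∏ k, (z k) ^ (p i k) := by
    intro z
    have hsum : ∀ k, ∑ j, q i j * A j k = p i k := by
      intro k
      rw [hexp i k]
      exact Finset.sum_congr rfl fun j _ => by rw [hA_apply]
    calc ∏ j, (∏ k, z k ^ A j k) ^ q i j
        = ∏ j, ∏ k, z k ^ (q i j * A j k) := by
          refine Finset.prod_congr rfl fun j _ => ?_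
          rw [prod_zpow']
          exact Finset.prod_congr rfl fun k _ => by rw [← zpow_mul, mul_comm]
      _ = ∏ k, ∏ j, z k ^ (q i j * A j k) := Finset.prod_comm
      _ = ∏ k, z k ^ (∑ j, q i j * A j k) :=
          Finset.prod_congr rfl fun k _ => (zpow_sum' _ _ _).symm
      _ = ∏ k, z k ^ (p i k) := Finset.prod_congr rfl fun k _ => by rw [hsum k]
  ext t
  simp only [Set.mem_image, Set.mem_setOf_eq]
  constructor
  · rintro ⟨z, hz, rfl⟩
    rw [hφ_apply]
    exact (key z).trans hz
  · intro ht
    refine ⟨φ.symm t, ?_, φ.apply_symm_apply t⟩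
    have h2 := key (φ.symm t)
    rw [show monomialMap A (φ.symm t) = t from
      (hφ_apply (φ.symm t)) ▸ φ.apply_symm_apply t] at h2
    rw [← h2]
    exact ht
end

section
/- Let n ≥ m ≥ 1 and let q : Fin m → Fin n → ℤ be an integer matrix in triangular form: q i j = 0 whenever (j : ℕ) < (i : ℕ), and q i ⟨(i : ℕ), lt_of_lt_of_le i.isLt (by assumption m ≤ n)⟩ ≠ 0 for every i : Fin m. Then for every α : Fin m → ℂˣ there exists w : Fin n → ℂˣ such that ∏ j, (w j) ^ (q i j) = α i for every i : Fin m. -/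
lemma exists_unit_pow_eq (k : ℕ) (hk : 0 < k) (c : ℂˣ) : ∃ b : ℂˣ, b ^ k = c := by
  obtain ⟨z, hz⟩ := IsAlgClosed.exists_pow_nat_eq (c : ℂ) hk
  have hz0 : z ≠ 0 := by
    intro h; rw [h, zero_pow hk.ne'] at hz; exact c.ne_zero hz.symm
  refine ⟨Units.mk0 z hz0, Units.ext ?_⟩
  simpa using hz

lemma exists_unit_zpow_eq (d : ℤ) (hd : d ≠ 0) (a : ℂˣ) : ∃ b : ℂˣ, b ^ d = a := by
  rcases lt_or_gt_of_ne hd with h | h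
  · obtain ⟨b, hb⟩ := exists_unit_pow_eq (-d).toNat (by omega) a⁻¹
    refine ⟨b, ?_⟩
    have hd' : d = -((-d).toNat : ℤ) := by omega
    rw [hd', zpow_neg, zpow_natCast, hb, inv_inv]
  · obtain ⟨b, hb⟩ := exists_unit_pow_eq d.toNat (by omega) a
    refine ⟨b, ?_⟩
    have hd' : d = (d.toNat : ℤ) := by omega
    rw [hd', zpow_natCast, hb]

lemma aux_triangular : ∀ (m n : ℕ) (hmn : m ≤ n) (q : Fin m → Fin n → ℤ),
    (∀ (i : Fin m) (j : Fin n), (j : ℕ) < (i : ℕ) → q i j = 0) →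
    (∀ i : Fin m, q i ⟨(i : ℕ), lt_of_lt_of_le i.isLt hmn⟩ ≠ 0) →
    ∀ α : Fin m → ℂˣ, ∃ w : Fin n → ℂˣ, ∀ i : Fin m, ∏ j, (w j) ^ (q i j) = α i := by
  intro m
  induction m with
  | zero => intro n _ q _ _ α; exact ⟨fun _ => 1, fun i => i.elim0⟩
  | succ m ih =>
    intro n hmn q htri hdiag α
    obtain ⟨n', rfl⟩ : ∃ n', n = n' + 1 := ⟨n - 1, by omega⟩
    have hmn' : m ≤ n' := by omega
    set q' : Fin m → Fin n' → ℤ := fun i j => q i.succ j.succ with hq'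
    obtain ⟨w', hw'⟩ := ih n' hmn' q'
      (fun i j h => htri i.succ j.succ (by simpa using h))
      (fun i => by
        have := hdiag i.succ
        simpa [hq', Fin.succ, Fin.ext_iff] using this)
      (fun i => α i.succ)
    set d : ℤ := q 0 0 with hd
    have hd0 : d ≠ 0 := by
      have := hdiag 0
      simpa [hd, Fin.ext_iff] using this
    set P : ℂˣ := ∏ j : Fin n', (w' j) ^ (q 0 j.succ) with hP
    obtain ⟨b, hb⟩ := exists_unit_zpow_eq d hd0 (α 0 * P⁻¹)
    refine ⟨Fin.cons b w', fun i => ?_⟩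
    rw [Fin.prod_univ_succ]
    simp only [Fin.cons_zero, Fin.cons_succ]
    refine Fin.cases ?_ (fun i' => ?_) i
    · rw [← hd, hb, ← hP]
      group
    · rw [htri i'.succ 0 (by simp), zpow_zero, one_mul]
      exact hw' i'

/-- the recursion of Step 3: for a triangular integer exponent matrix
with nonzero diagonal, every system of constants is realized by a single point. -/
theorem triangular_constants_realizable
    (n m : ℕ) (hm : 1 ≤ m) (hmn : m ≤ n)
    (q : Fin m → Fin n → ℤ)
    (htri : ∀ (i : Fin m) (j : Fin n), (j : ℕ) < (i : ℕ) → q i j = 0)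
    (hdiag : ∀ i : Fin m, q i ⟨(i : ℕ), lt_of_lt_of_le i.isLt hmn⟩ ≠ 0) :
    ∀ α : Fin m → ℂˣ, ∃ w : Fin n → ℂˣ, ∀ i : Fin m, ∏ j, (w j) ^ (q i j) = α i :=
  aux_triangular m n hmn q htri hdiag
end

section
/- Let n ≥ m ≥ 1 and let q : Fin m → Fin n → ℤ be an integer matrix whose m rows are linearly independent over ℚ. Then the group homomorphism χ : (Fin n → ℂˣ) → (Fin m → ℂˣ) defined by (χ w) i = ∏ j, (w j) ^ (q i j) is surjective. -/
noncomputable instance : RootableBy ℂˣ ℕ :=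
  rootableByOfPowLeftSurj _ _ fun {k} hk u => by
    obtain ⟨z, hz⟩ := IsAlgClosed.exists_pow_nat_eq (u : ℂ) (Nat.pos_of_ne_zero hk)
    have hz0 : z ≠ 0 := by
      rintro rfl
      rw [zero_pow hk] at hz
      exact u.ne_zero hz.symm
    exact ⟨Units.mk0 z hz0, Units.ext (by simpa using hz)⟩

noncomputable instance : RootableBy ℂˣ ℤ :=
  Group.rootableByIntOfRootableByNat ℂˣ

noncomputable instance : DivisibleBy (Additive ℂˣ) ℤ where
  div a k := Additive.ofMul (RootableBy.root (Additive.toMul a) k)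
  div_zero a := congrArg Additive.ofMul (RootableBy.root_zero (Additive.toMul a))
  div_cancel a hk := congrArg Additive.ofMul (RootableBy.root_cancel (Additive.toMul a) hk)

/-- for an integer matrix with rows linearly independent over `ℚ`,
the associated monomial homomorphism `(ℂˣ)^n → (ℂˣ)^m` is surjective. -/
theorem monomial_hom_surjective
    (n m : ℕ) (hm : 1 ≤ m) (hmn : m ≤ n)
    (q : Fin m → Fin n → ℤ)
    (hq : LinearIndependent ℚ (fun i : Fin m => fun j : Fin n => (q i j : ℚ))) :
    Function.Surjective
      (fun (w : Fin n → ℂˣ) (i : Fin m) => ∏ j, (w j) ^ (q i j)) := by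
  intro z
  -- the transpose-multiplication map ℤ^m → ℤ^n
  set L : (Fin m → ℤ) →ₗ[ℤ] (Fin n → ℤ) := (Matrix.of q).vecMulLinear with hL
  have hLapp : ∀ (v : Fin m → ℤ) (j : Fin n), L v j = ∑ i, v i * q i j := by
    intro v j
    simp [hL, Matrix.vecMulLinear_apply, Matrix.vecMul, dotProduct]
  have hLinj : Function.Injective L := by
    rw [injective_iff_map_eq_zero]
    intro v hv
    have key := Fintype.linearIndependent_iff.mp hq (fun i => (v i : ℚ))
    have hsum : ∑ i, (v i : ℚ) • (fun j : Fin n => (q i j : ℚ)) = 0 := by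
      funext j
      have := congrFun hv j
      rw [hLapp] at this
      have : ((∑ i, v i * q i j : ℤ) : ℚ) = 0 := by exact_mod_cast this
      push_cast at this
      simpa [Finset.sum_apply] using this
    funext i
    have := key hsum i
    exact_mod_cast this
  -- the character to extend
  let g : (Fin m → ℤ) →+ Additive ℂˣ :=
    { toFun := fun v => ∑ i, v i • Additive.ofMul (z i)
      map_zero' := by simp
      map_add' := fun v w => by
        show ∑ x, ((v + w) x) • Additive.ofMul (z x)
            = ∑ i, v i • Additive.ofMul (z i) + ∑ i, w i • Additive.ofMul (z i)
        simp only [Pi.add_apply]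
        have h : ∀ x ∈ Finset.univ, (v x + w x) • Additive.ofMul (z x)
            = v x • Additive.ofMul (z x) + w x • Additive.ofMul (z x) :=
          fun x _ => add_zsmul _ _ _
        rw [Finset.sum_congr rfl h, Finset.sum_add_distrib] }
  obtain ⟨G, hG⟩ := (Module.Baer.of_divisible (Additive ℂˣ)).extension_property_addMonoidHom
    L.toAddMonoidHom hLinj g
  refine ⟨fun j => Additive.toMul (G (Pi.single j 1)), ?_⟩
  funext i
  have hrep : ∀ u : Fin n → ℤ, G u = ∑ j, u j • G (Pi.single j 1) := by
    intro u
    conv_lhs => rw [pi_eq_sum_univ u]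
    rw [map_sum]
    refine Finset.sum_congr rfl fun j _ => ?_
    have h1 : (fun k => if j = k then (1:ℤ) else 0) = Pi.single j 1 := by
      funext k; simp [Pi.single_apply, eq_comm]
    rw [map_zsmul, h1]
  have hLe : L (Pi.single i 1) = fun j => q i j := by
    funext j
    rw [hLapp]
    rw [Finset.sum_eq_single i]
    · simp
    · intro k _ hk; simp [Pi.single_apply, hk]
    · simp
  have hGe : G (fun j => q i j) = Additive.ofMul (z i) := by
    rw [← hLe]
    have := congrFun (congrArg DFunLike.coe hG) (Pi.single i 1)
    simp only [AddMonoidHom.coe_comp, Function.comp_apply, LinearMap.toAddMonoidHom_coe] at this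
    rw [this]
    simp only [g, AddMonoidHom.coe_mk, ZeroHom.coe_mk]
    rw [Finset.sum_eq_single i]
    · simp
    · intro k _ hk; simp [Pi.single_apply, hk]
    · simp
  simp only
  have key : ∏ j, Additive.toMul (G (Pi.single j 1)) ^ q i j
      = Additive.toMul (∑ j, q i j • G (Pi.single j 1)) := by
    rw [toMul_sum]
    exact Finset.prod_congr rfl fun j _ => (toMul_zsmul _ _).symm
  rw [key, ← hrep, hGe]
  rfl
end
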